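/- Let P and Z be real symmetric n×n matrices such that R(P), R(P+Z), R_22(P+Z) and the Schur complement R#_22(P+Z) = R_11(P+Z) − R_12(P+Z) R_22(P+Z)^{-1} R_21(P+Z) are invertible. Suppose Z satisfies the inner Riccati equation at P. Then G(P+Z) = −(N_1(P,Z) − R_12(P+Z) R_22(P+Z)^{-1} N_2(P,Z))^T (R#_22(P+Z))^{-1} (N_1(P,Z) − R_12(P+Z) R_22(P+Z)^{-1} N_2(P,Z)). -/

import Mathlib

open Matrix BigOperators

noncomputable section

/-- Mean-square stability of the tuple `(F, G_1, …, G_r)` via the Lyapunov characterization. -/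
def MSStable {n r : ℕ} (F : Matrix (Fin n) (Fin n) ℝ)
    (G : Fin r → Matrix (Fin n) (Fin n) ℝ) : Prop :=
  ∃ X : Matrix (Fin n) (Fin n) ℝ, X.PosDef ∧
    (-(X * F + Fᵀ * X + ∑ l, (G l)ᵀ * X * G l)).PosDef

/-- Stochastic detectability of the system `[E_0, …, E_r; F, G_1, …, G_r]`. -/
def StochDetectable {n q r : ℕ} (E0 : Matrix (Fin q) (Fin n) ℝ)
    (E : Fin r → Matrix (Fin q) (Fin n) ℝ)
    (F : Matrix (Fin n) (Fin n) ℝ) (G : Fin r → Matrix (Fin n) (Fin n) ℝ) : Prop :=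
  ∃ Θ : Matrix (Fin n) (Fin q) ℝ, MSStable (F + Θ * E0) (fun l => G l + Θ * E l)

/-- The data of the zero-sum linear-quadratic stochastic differential game. -/
structure GameData (n m1 m2 r : ℕ) where
  A : Matrix (Fin n) (Fin n) ℝ
  C : Fin r → Matrix (Fin n) (Fin n) ℝ
  B1 : Matrix (Fin n) (Fin m1) ℝ
  B2 : Matrix (Fin n) (Fin m2) ℝ
  D1 : Fin r → Matrix (Fin n) (Fin m1) ℝ
  D2 : Fin r → Matrix (Fin n) (Fin m2) ℝ
  Q : Matrix (Fin n) (Fin n) ℝ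
  hQ : Q.IsSymm
  S1 : Matrix (Fin m1) (Fin n) ℝ
  S2 : Matrix (Fin m2) (Fin n) ℝ
  R11 : Matrix (Fin m1) (Fin m1) ℝ
  R22 : Matrix (Fin m2) (Fin m2) ℝ
  R12 : Matrix (Fin m1) (Fin m2) ℝ
  hR11 : R11.IsSymm
  hR22 : R22.IsSymm

namespace GameData

variable {n m1 m2 r : ℕ} (g : GameData n m1 m2 r)

/-- The stacked weighting matrix `S = [S_1; S_2]`. -/
def Sw : Matrix (Fin m1 ⊕ Fin m2) (Fin n) ℝ := fromRows g.S1 g.S2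

/-- The full weighting matrix `R = [[R_11, R_12],[R_21, R_22]]` with `R_21 = R_12ᵀ`. -/
def Rw : Matrix (Fin m1 ⊕ Fin m2) (Fin m1 ⊕ Fin m2) ℝ :=
  fromBlocks g.R11 g.R12 g.R12ᵀ g.R22

/-- `S_1(P) = B_1ᵀ P + Σ_l D_{l,1}ᵀ P C_l + S_1`. -/
def S1P (P : Matrix (Fin n) (Fin n) ℝ) : Matrix (Fin m1) (Fin n) ℝ :=
  g.B1ᵀ * P + ∑ l, (g.D1 l)ᵀ * P * g.C l + g.S1

/-- `S_2(P) = B_2ᵀ P + Σ_l D_{l,2}ᵀ P C_l + S_2`. -/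
def S2P (P : Matrix (Fin n) (Fin n) ℝ) : Matrix (Fin m2) (Fin n) ℝ :=
  g.B2ᵀ * P + ∑ l, (g.D2 l)ᵀ * P * g.C l + g.S2

/-- `S(P) = [S_1(P); S_2(P)]`. -/
def SP (P : Matrix (Fin n) (Fin n) ℝ) : Matrix (Fin m1 ⊕ Fin m2) (Fin n) ℝ :=
  fromRows (g.S1P P) (g.S2P P)

/-- `R_11(P)`. -/
def R11P (P : Matrix (Fin n) (Fin n) ℝ) : Matrix (Fin m1) (Fin m1) ℝ :=
  g.R11 + ∑ l, (g.D1 l)ᵀ * P * g.D1 l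

/-- `R_12(P)`. -/
def R12P (P : Matrix (Fin n) (Fin n) ℝ) : Matrix (Fin m1) (Fin m2) ℝ :=
  g.R12 + ∑ l, (g.D1 l)ᵀ * P * g.D2 l

/-- `R_21(P)`. -/
def R21P (P : Matrix (Fin n) (Fin n) ℝ) : Matrix (Fin m2) (Fin m1) ℝ :=
  g.R12ᵀ + ∑ l, (g.D2 l)ᵀ * P * g.D1 l

/-- `R_22(P)`. -/
def R22P (P : Matrix (Fin n) (Fin n) ℝ) : Matrix (Fin m2) (Fin m2) ℝ :=
  g.R22 + ∑ l, (g.D2 l)ᵀ * P * g.D2 l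

/-- `R(P)` assembled from its blocks. -/
def RP (P : Matrix (Fin n) (Fin n) ℝ) : Matrix (Fin m1 ⊕ Fin m2) (Fin m1 ⊕ Fin m2) ℝ :=
  fromBlocks (g.R11P P) (g.R12P P) (g.R21P P) (g.R22P P)

/-- `K(P) = −R(P)⁻¹ S(P)` (stacked feedback gain). -/
def KP (P : Matrix (Fin n) (Fin n) ℝ) : Matrix (Fin m1 ⊕ Fin m2) (Fin n) ℝ :=
  -((g.RP P)⁻¹ * g.SP P)

/-- `K_1(P)`: the first block of `K(P)`. -/
def K1 (P : Matrix (Fin n) (Fin n) ℝ) : Matrix (Fin m1) (Fin n) ℝ :=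
  (g.KP P).submatrix Sum.inl id

/-- `K_2(P)`: the second block of `K(P)`. -/
def K2 (P : Matrix (Fin n) (Fin n) ℝ) : Matrix (Fin m2) (Fin n) ℝ :=
  (g.KP P).submatrix Sum.inr id

/-- `G(P) = PA + AᵀP + Σ_l C_lᵀ P C_l + Q − S(P)ᵀ R(P)⁻¹ S(P)`. -/
def GP (P : Matrix (Fin n) (Fin n) ℝ) : Matrix (Fin n) (Fin n) ℝ :=
  P * g.A + g.Aᵀ * P + ∑ l, (g.C l)ᵀ * P * g.C l + g.Q
    - (g.SP P)ᵀ * (g.RP P)⁻¹ * g.SP P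

/-- `A_{K(P)} = A + B_1 K_1(P) + B_2 K_2(P)`. -/
def AK (P : Matrix (Fin n) (Fin n) ℝ) : Matrix (Fin n) (Fin n) ℝ :=
  g.A + g.B1 * g.K1 P + g.B2 * g.K2 P

/-- `C_{l,K(P)} = C_l + D_{l,1} K_1(P) + D_{l,2} K_2(P)`. -/
def CK (P : Matrix (Fin n) (Fin n) ℝ) (l : Fin r) : Matrix (Fin n) (Fin n) ℝ :=
  g.C l + g.D1 l * g.K1 P + g.D2 l * g.K2 P

/-- `N_1(P,Z)`. -/
def N1 (P Z : Matrix (Fin n) (Fin n) ℝ) : Matrix (Fin m1) (Fin n) ℝ :=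
  g.B1ᵀ * Z + ∑ l, (g.D1 l)ᵀ * Z * g.CK P l

/-- `N_2(P,Z)`. -/
def N2 (P Z : Matrix (Fin n) (Fin n) ℝ) : Matrix (Fin m2) (Fin n) ℝ :=
  g.B2ᵀ * Z + ∑ l, (g.D2 l)ᵀ * Z * g.CK P l

/-- `N(P,Z) = [N_1(P,Z); N_2(P,Z)]`. -/
def NP (P Z : Matrix (Fin n) (Fin n) ℝ) : Matrix (Fin m1 ⊕ Fin m2) (Fin n) ℝ :=
  fromRows (g.N1 P Z) (g.N2 P Z)

/-- Membership in `Dom G`: `R_22(P) ≻ 0` and `R_11(P) ≺ 0`. -/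
def MemDomG (P : Matrix (Fin n) (Fin n) ℝ) : Prop :=
  (g.R22P P).PosDef ∧ (-(g.R11P P)).PosDef

/-- `Z` satisfies the inner Riccati equation at `P`. -/
def InnerRiccati (P Z : Matrix (Fin n) (Fin n) ℝ) : Prop :=
  g.GP P + Z * g.AK P + (g.AK P)ᵀ * Z + ∑ l, (g.CK P l)ᵀ * Z * g.CK P l
    - (g.N2 P Z)ᵀ * (g.R22P (P + Z))⁻¹ * g.N2 P Z = 0

/-- `A_L = A + B_1 K_1(0) + B_2 K_2(0) + B_2 L`. -/
def AL (L : Matrix (Fin m2) (Fin n) ℝ) : Matrix (Fin n) (Fin n) ℝ :=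
  g.A + g.B1 * g.K1 0 + g.B2 * g.K2 0 + g.B2 * L

/-- `C_{lL} = C_l + D_{l,1} K_1(0) + D_{l,2} K_2(0) + D_{l,2} L`. -/
def CL (L : Matrix (Fin m2) (Fin n) ℝ) (l : Fin r) : Matrix (Fin n) (Fin n) ℝ :=
  g.C l + g.D1 l * g.K1 0 + g.D2 l * g.K2 0 + g.D2 l * L

/-- `Q_L = Q − S(0)ᵀ R(0)⁻¹ S(0) + Lᵀ R_22 L`. -/
def QL (L : Matrix (Fin m2) (Fin n) ℝ) : Matrix (Fin n) (Fin n) ℝ :=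
  g.Q - (g.SP 0)ᵀ * (g.RP 0)⁻¹ * g.SP 0 + Lᵀ * g.R22 * L

/-- `S_L = R_12 L`. -/
def SL (L : Matrix (Fin m2) (Fin n) ℝ) : Matrix (Fin m1) (Fin n) ℝ := g.R12 * L

/-- The linear term `B_1ᵀ P + Σ_l D_{l,1}ᵀ P C_{lL} + S_L` in the `L`-Riccati equation. -/
def S1L (L : Matrix (Fin m2) (Fin n) ℝ) (P : Matrix (Fin n) (Fin n) ℝ) :
    Matrix (Fin m1) (Fin n) ℝ :=
  g.B1ᵀ * P + ∑ l, (g.D1 l)ᵀ * P * g.CL L l + g.SL L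

/-- Left-hand side of the algebraic Riccati equation associated with `L`. -/
def AREL (L : Matrix (Fin m2) (Fin n) ℝ) (P : Matrix (Fin n) (Fin n) ℝ) :
    Matrix (Fin n) (Fin n) ℝ :=
  P * g.AL L + (g.AL L)ᵀ * P + ∑ l, (g.CL L l)ᵀ * P * g.CL L l + g.QL L
    - (g.S1L L P)ᵀ * (g.R11P P)⁻¹ * g.S1L L P

/-- `K_L(P) = −(R_11 + Σ_l D_{l,1}ᵀ P D_{l,1})⁻¹ (B_1ᵀ P + Σ_l D_{l,1}ᵀ P C_{lL} + S_L)`. -/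
def KL (L : Matrix (Fin m2) (Fin n) ℝ) (P : Matrix (Fin n) (Fin n) ℝ) :
    Matrix (Fin m1) (Fin n) ℝ :=
  -((g.R11P P)⁻¹ * g.S1L L P)

/-- `P̃` is a stabilizing solution of the `L`-Riccati equation. -/
def IsStabSolL (L : Matrix (Fin m2) (Fin n) ℝ) (P : Matrix (Fin n) (Fin n) ℝ) : Prop :=
  P.IsSymm ∧ g.AREL L P = 0 ∧ (-(g.R11P P)).PosDef ∧
    MSStable (g.AL L + g.B1 * g.KL L P) (fun l => g.CL L l + g.D1 l * g.KL L P)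

/-- `L ∈ 𝒜`. -/
def MemA (L : Matrix (Fin m2) (Fin n) ℝ) : Prop :=
  MSStable (g.AL L) (g.CL L) ∧ ∃ P, g.IsStabSolL L P

end GameData

/-! ### Auxiliary lemmas for Statement 5 -/

lemma sum_fromRows' {R : Type*} [AddCommMonoid R] {m₁ m₂ n ι : Type*} (s : Finset ι)
    (f : ι → Matrix m₁ n R) (h : ι → Matrix m₂ n R) :
    ∑ i ∈ s, Matrix.fromRows (f i) (h i) = Matrix.fromRows (∑ i ∈ s, f i) (∑ i ∈ s, h i) := by
  ext (i|i) j <;> simp [Matrix.sum_apply]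

lemma fromRows_add' {R : Type*} [AddCommMonoid R] {m₁ m₂ n : Type*}
    (A₁ : Matrix m₁ n R) (A₂ : Matrix m₂ n R) (B₁ : Matrix m₁ n R) (B₂ : Matrix m₂ n R) :
    Matrix.fromRows A₁ A₂ + Matrix.fromRows B₁ B₂ = Matrix.fromRows (A₁ + B₁) (A₂ + B₂) := by
  ext (i|i) j <;> simp

lemma sum_fromBlocks' {R : Type*} [AddCommMonoid R] {m₁ m₂ n₁ n₂ ι : Type*} (s : Finset ι)
    (f : ι → Matrix m₁ n₁ R) (g : ι → Matrix m₁ n₂ R) (h : ι → Matrix m₂ n₁ R)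
    (k : ι → Matrix m₂ n₂ R) :
    ∑ i ∈ s, Matrix.fromBlocks (f i) (g i) (h i) (k i)
      = Matrix.fromBlocks (∑ i ∈ s, f i) (∑ i ∈ s, g i) (∑ i ∈ s, h i) (∑ i ∈ s, k i) := by
  ext (i|i) (j|j) <;> simp [Matrix.sum_apply]

namespace GameData

variable {n m1 m2 r : ℕ} (g : GameData n m1 m2 r)

/-- Stacked input matrix `B = [B₁ B₂]`. -/
def Bw : Matrix (Fin n) (Fin m1 ⊕ Fin m2) ℝ := fromCols g.B1 g.B2

/-- Stacked noise input matrices `D_l = [D_{l,1} D_{l,2}]`. -/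
def Dw (l : Fin r) : Matrix (Fin n) (Fin m1 ⊕ Fin m2) ℝ := fromCols (g.D1 l) (g.D2 l)

lemma KP_eq_fromRows (P : Matrix (Fin n) (Fin n) ℝ) :
    g.KP P = fromRows (g.K1 P) (g.K2 P) := by
  ext (i|i) j <;> simp [K1, K2]

lemma SP_stack (P : Matrix (Fin n) (Fin n) ℝ) :
    g.SP P = g.Bwᵀ * P + (∑ l, (g.Dw l)ᵀ * P * g.C l) + g.Sw := by
  simp only [SP, S1P, S2P, Bw, Dw, Sw, transpose_fromCols, fromRows_mul,
    sum_fromRows', fromRows_add']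

lemma RP_stack (P : Matrix (Fin n) (Fin n) ℝ) :
    g.RP P = g.Rw + ∑ l, (g.Dw l)ᵀ * P * g.Dw l := by
  simp only [RP, R11P, R12P, R21P, R22P, Rw, Dw, transpose_fromCols, Matrix.mul_assoc,
    mul_fromCols, fromRows_mul, fromCols_fromRows_eq_fromBlocks, sum_fromBlocks', fromBlocks_add]

lemma CK_stack (P : Matrix (Fin n) (Fin n) ℝ) (l : Fin r) :
    g.CK P l = g.C l + g.Dw l * g.KP P := by
  rw [CK, Dw, KP_eq_fromRows, fromCols_mul_fromRows, add_assoc]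

lemma AK_stack (P : Matrix (Fin n) (Fin n) ℝ) :
    g.AK P = g.A + g.Bw * g.KP P := by
  rw [AK, Bw, KP_eq_fromRows, fromCols_mul_fromRows, add_assoc]

lemma NP_stack (P Z : Matrix (Fin n) (Fin n) ℝ) :
    g.NP P Z = g.Bwᵀ * Z + ∑ l, (g.Dw l)ᵀ * Z * g.CK P l := by
  simp only [NP, N1, N2, Bw, Dw, transpose_fromCols, fromRows_mul,
    sum_fromRows', fromRows_add']

lemma Rw_symm : g.Rwᵀ = g.Rw := by
  rw [Rw, fromBlocks_transpose, transpose_transpose, g.hR11.eq, g.hR22.eq]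

lemma RP_symm (W : Matrix (Fin n) (Fin n) ℝ) (hW : Wᵀ = W) : (g.RP W)ᵀ = g.RP W := by
  rw [RP_stack, transpose_add, Rw_symm, transpose_sum]
  congr 1
  refine Finset.sum_congr rfl fun l _ => ?_
  simp [transpose_mul, hW, Matrix.mul_assoc]

lemma R22P_symm (W : Matrix (Fin n) (Fin n) ℝ) (hW : Wᵀ = W) : (g.R22P W)ᵀ = g.R22P W := by
  rw [R22P, transpose_add, g.hR22.eq, transpose_sum]
  congr 1
  refine Finset.sum_congr rfl fun l _ => ?_
  simp [transpose_mul, hW, Matrix.mul_assoc]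

lemma R21P_eq (W : Matrix (Fin n) (Fin n) ℝ) (hW : Wᵀ = W) : g.R21P W = (g.R12P W)ᵀ := by
  rw [R21P, R12P, transpose_add, transpose_sum]
  congr 1
  refine Finset.sum_congr rfl fun l _ => ?_
  simp [transpose_mul, hW, Matrix.mul_assoc]

end GameData

namespace GameData

variable {n m1 m2 r : ℕ} (g : GameData n m1 m2 r)

/-- Completion of squares identity: for any symmetric `W`, the Lyapunov-type expression of `W`
along the closed loop `K(P)` equals the affine expression of `W` plus cross terms. -/
lemma completion (P W : Matrix (Fin n) (Fin n) ℝ) (hW : Wᵀ = W) :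
    W * g.AK P + (g.AK P)ᵀ * W + (∑ l, (g.CK P l)ᵀ * W * g.CK P l) + g.Q
      + (g.KP P)ᵀ * g.Rw * g.KP P + g.Swᵀ * g.KP P + (g.KP P)ᵀ * g.Sw
    = W * g.A + g.Aᵀ * W + (∑ l, (g.C l)ᵀ * W * g.C l) + g.Q
      + (g.SP W)ᵀ * g.KP P + (g.KP P)ᵀ * g.SP W + (g.KP P)ᵀ * g.RP W * g.KP P := by
  simp only [AK_stack, CK_stack, SP_stack, RP_stack, transpose_add, transpose_mul,
    transpose_sum, transpose_transpose, hW, Matrix.mul_add, Matrix.add_mul,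
    Finset.sum_add_distrib, Matrix.sum_mul, Matrix.mul_sum, Matrix.mul_assoc]
  abel

end GameData

/-- Quadratic form in the inverse of a block matrix, via the Schur complement of the
lower-right block. -/
lemma schur_quad {m1 m2 n : Type*} [Fintype m1] [Fintype m2] [DecidableEq m1] [DecidableEq m2]
    (R11 : Matrix m1 m1 ℝ) (R12 : Matrix m1 m2 ℝ) (R21 : Matrix m2 m1 ℝ) (R22 : Matrix m2 m2 ℝ)
    (N1 : Matrix m1 n ℝ) (N2 : Matrix m2 n ℝ)
    (h21 : R21 = R12ᵀ) (h22 : R22ᵀ = R22)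
    (hR22 : IsUnit R22.det) (hS : IsUnit (R11 - R12 * R22⁻¹ * R21).det) :
    (Matrix.fromRows N1 N2)ᵀ * (Matrix.fromBlocks R11 R12 R21 R22)⁻¹ * Matrix.fromRows N1 N2
      = (N1 - R12 * R22⁻¹ * N2)ᵀ * (R11 - R12 * R22⁻¹ * R21)⁻¹ * (N1 - R12 * R22⁻¹ * N2)
        + N2ᵀ * R22⁻¹ * N2 := by
  have h22inv : (R22⁻¹)ᵀ = R22⁻¹ := by rw [Matrix.transpose_nonsing_inv, h22]
  letI i22 : Invertible R22 := R22.invertibleOfIsUnitDet hR22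
  have hi22 : ⅟R22 = R22⁻¹ := R22.invOf_eq_nonsing_inv
  letI iS : Invertible (R11 - R12 * ⅟R22 * R21) := by
    rw [hi22]; exact (R11 - R12 * R22⁻¹ * R21).invertibleOfIsUnitDet hS
  letI iB : Invertible (Matrix.fromBlocks R11 R12 R21 R22) :=
    Matrix.fromBlocks₂₂Invertible R11 R12 R21 R22
  have hiS : ⅟(R11 - R12 * ⅟R22 * R21) = (R11 - R12 * R22⁻¹ * R21)⁻¹ := by
    rw [Matrix.invOf_eq_nonsing_inv, hi22]
  have hM : (Matrix.fromBlocks R11 R12 R21 R22)⁻¹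
      = Matrix.fromBlocks ((R11 - R12 * R22⁻¹ * R21)⁻¹)
          (-((R11 - R12 * R22⁻¹ * R21)⁻¹ * R12 * R22⁻¹))
          (-(R22⁻¹ * R21 * (R11 - R12 * R22⁻¹ * R21)⁻¹))
          (R22⁻¹ + R22⁻¹ * R21 * (R11 - R12 * R22⁻¹ * R21)⁻¹ * R12 * R22⁻¹) := by
    rw [← Matrix.invOf_eq_nonsing_inv, Matrix.invOf_fromBlocks₂₂_eq, hiS, hi22]
  rw [hM, Matrix.transpose_fromRows, Matrix.fromCols_mul_fromBlocks,
    Matrix.fromCols_mul_fromRows]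
  simp only [transpose_sub, transpose_add, transpose_neg, transpose_mul, h22inv, ← h21, sub_eq_add_neg, Matrix.neg_mul,
    Matrix.mul_neg, Matrix.add_mul, Matrix.mul_add, Matrix.mul_assoc, neg_neg]
  abel

/-- if `Z` satisfies the inner Riccati equation at `P`, then `G(P+Z)` equals
minus the Schur-complement quadratic form of the correction terms. -/
theorem statement5 {n m1 m2 r : ℕ} (g : GameData n m1 m2 r)
    (P Z : Matrix (Fin n) (Fin n) ℝ) (hP : P.IsSymm) (hZ : Z.IsSymm)
    (hRP : IsUnit (g.RP P).det) (hRPZ : IsUnit (g.RP (P + Z)).det)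
    (hR22 : IsUnit (g.R22P (P + Z)).det)
    (hSchur : IsUnit (g.R11P (P + Z)
      - g.R12P (P + Z) * (g.R22P (P + Z))⁻¹ * g.R21P (P + Z)).det)
    (hZeq : g.InnerRiccati P Z) :
    g.GP (P + Z) =
      -((g.N1 P Z - g.R12P (P + Z) * (g.R22P (P + Z))⁻¹ * g.N2 P Z)ᵀ
        * (g.R11P (P + Z) - g.R12P (P + Z) * (g.R22P (P + Z))⁻¹ * g.R21P (P + Z))⁻¹
        * (g.N1 P Z - g.R12P (P + Z) * (g.R22P (P + Z))⁻¹ * g.N2 P Z)) := by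
  have hPt : Pᵀ = P := hP
  have hZt : Zᵀ = Z := hZ
  have hPZt : (P + Z)ᵀ = P + Z := by rw [transpose_add, hPt, hZt]
  have hKdef : g.KP P = -((g.RP P)⁻¹ * g.SP P) := rfl
  have h1 : g.RP P * g.KP P = -(g.SP P) := by
    rw [hKdef, Matrix.mul_neg, ← Matrix.mul_assoc, Matrix.mul_nonsing_inv _ hRP, Matrix.one_mul]
  have h1' : g.SP P + g.RP P * g.KP P = 0 := by rw [h1, add_neg_cancel]
  have h2 : g.NP P Z = g.SP (P + Z) + g.RP (P + Z) * g.KP P := by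
    have key : g.SP (P + Z) + g.RP (P + Z) * g.KP P - g.NP P Z
        = g.SP P + g.RP P * g.KP P := by
      simp only [GameData.NP_stack, GameData.SP_stack, GameData.RP_stack, GameData.CK_stack,
        Matrix.mul_add, Matrix.add_mul, Finset.sum_add_distrib, Matrix.sum_mul, Matrix.mul_sum,
        Matrix.mul_assoc]
      abel
    rw [h1'] at key
    exact (sub_eq_zero.mp key).symm
  have hR0T : (g.RP P)ᵀ = g.RP P := g.RP_symm P hPt
  have hR0invT : ((g.RP P)⁻¹)ᵀ = (g.RP P)⁻¹ := by rw [Matrix.transpose_nonsing_inv, hR0T]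
  have e1 : (g.SP P)ᵀ * g.KP P = -((g.SP P)ᵀ * (g.RP P)⁻¹ * g.SP P) := by
    rw [hKdef, Matrix.mul_neg, Matrix.mul_assoc]
  have e2 : (g.KP P)ᵀ * g.SP P = -((g.SP P)ᵀ * (g.RP P)⁻¹ * g.SP P) := by
    rw [hKdef, transpose_neg, transpose_mul, hR0invT, Matrix.neg_mul, Matrix.mul_assoc]
  have e3 : (g.KP P)ᵀ * g.RP P * g.KP P = (g.SP P)ᵀ * (g.RP P)⁻¹ * g.SP P := by
    rw [Matrix.mul_assoc, h1, Matrix.mul_neg, e2, neg_neg]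
  have hGPdef : ∀ W, g.GP W = W * g.A + g.Aᵀ * W + (∑ l, (g.C l)ᵀ * W * g.C l) + g.Q
      - (g.SP W)ᵀ * (g.RP W)⁻¹ * g.SP W := fun _ => rfl
  have hGP0 : g.GP P = P * g.A + g.Aᵀ * P + (∑ l, (g.C l)ᵀ * P * g.C l) + g.Q
      + (g.SP P)ᵀ * g.KP P + (g.KP P)ᵀ * g.SP P + (g.KP P)ᵀ * g.RP P * g.KP P := by
    rw [hGPdef, e1, e2, e3]; abel
  have c1 := g.completion P P hPt
  have c2 := g.completion P (P + Z) hPZt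
  have caff : (P + Z) * g.AK P + (g.AK P)ᵀ * (P + Z)
        + (∑ l, (g.CK P l)ᵀ * (P + Z) * g.CK P l) + g.Q
        + (g.KP P)ᵀ * g.Rw * g.KP P + g.Swᵀ * g.KP P + (g.KP P)ᵀ * g.Sw
      = (P * g.AK P + (g.AK P)ᵀ * P + (∑ l, (g.CK P l)ᵀ * P * g.CK P l) + g.Q
          + (g.KP P)ᵀ * g.Rw * g.KP P + g.Swᵀ * g.KP P + (g.KP P)ᵀ * g.Sw)
        + (Z * g.AK P + (g.AK P)ᵀ * Z + ∑ l, (g.CK P l)ᵀ * Z * g.CK P l) := by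
    simp only [Matrix.mul_add, Matrix.add_mul, Finset.sum_add_distrib]
    abel
  have hIR : g.GP P + Z * g.AK P + (g.AK P)ᵀ * Z + ∑ l, (g.CK P l)ᵀ * Z * g.CK P l
      - (g.N2 P Z)ᵀ * (g.R22P (P + Z))⁻¹ * g.N2 P Z = 0 := hZeq
  rw [sub_eq_zero] at hIR
  have h6 : (P + Z) * g.A + g.Aᵀ * (P + Z) + (∑ l, (g.C l)ᵀ * (P + Z) * g.C l) + g.Q
      + (g.SP (P + Z))ᵀ * g.KP P + (g.KP P)ᵀ * g.SP (P + Z)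
      + (g.KP P)ᵀ * g.RP (P + Z) * g.KP P
      = (g.N2 P Z)ᵀ * (g.R22P (P + Z))⁻¹ * g.N2 P Z := by
    rw [← c2, caff, c1, ← hGP0, ← hIR]
    abel
  have hRpT : (g.RP (P + Z))ᵀ = g.RP (P + Z) := g.RP_symm _ hPZt
  have hinv1 : (g.RP (P + Z))⁻¹ * g.RP (P + Z) = 1 := Matrix.nonsing_inv_mul _ hRPZ
  have hinv2 : g.RP (P + Z) * (g.RP (P + Z))⁻¹ = 1 := Matrix.mul_nonsing_inv _ hRPZ
  have k1 : (g.RP (P + Z))⁻¹ * (g.RP (P + Z) * g.KP P) = g.KP P := by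
    rw [← Matrix.mul_assoc, hinv1, Matrix.one_mul]
  have k2 : g.RP (P + Z) * ((g.RP (P + Z))⁻¹ * g.SP (P + Z)) = g.SP (P + Z) := by
    rw [← Matrix.mul_assoc, hinv2, Matrix.one_mul]
  have eN : (g.NP P Z)ᵀ * (g.RP (P + Z))⁻¹ * g.NP P Z
      = (g.SP (P + Z))ᵀ * (g.RP (P + Z))⁻¹ * g.SP (P + Z)
        + (g.SP (P + Z))ᵀ * g.KP P + (g.KP P)ᵀ * g.SP (P + Z)
        + (g.KP P)ᵀ * g.RP (P + Z) * g.KP P := by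
    rw [h2]
    simp only [transpose_add, transpose_mul, hRpT, Matrix.add_mul, Matrix.mul_add,
      Matrix.mul_assoc, k1, k2]
    abel
  have h7 : g.GP (P + Z)
      = (g.N2 P Z)ᵀ * (g.R22P (P + Z))⁻¹ * g.N2 P Z
        - (g.NP P Z)ᵀ * (g.RP (P + Z))⁻¹ * g.NP P Z := by
    rw [hGPdef, ← h6, eN]
    abel
  have hb : g.RP (P + Z)
      = fromBlocks (g.R11P (P + Z)) (g.R12P (P + Z)) (g.R21P (P + Z)) (g.R22P (P + Z)) := rfl
  have hfr : g.NP P Z = fromRows (g.N1 P Z) (g.N2 P Z) := rfl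
  have h8 := schur_quad (g.R11P (P + Z)) (g.R12P (P + Z)) (g.R21P (P + Z)) (g.R22P (P + Z))
    (g.N1 P Z) (g.N2 P Z) (g.R21P_eq _ hPZt) (g.R22P_symm _ hPZt) hR22 hSchur
  rw [← hb, ← hfr] at h8
  rw [h7, h8]
  abel
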